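/- Let m, n ≥ 1 and let (A_{ij})_{1 ≤ i,j ≤ m} be a family of n×n matrices over K. Let φ be the K-linear endomorphism of K^m ⊗ K^n determined on the standard basis by φ(e_j ⊗ v) = Σ_{i=1}^m e_i ⊗ (A_{ij} v) for all j ∈ {1,…,m} and v ∈ K^n (equivalently, the matrix of φ in the basis (e_i ⊗ f_k) is the block matrix with (i,j) block A_{ij}). Then φ is tree-compatible if, and only if, for all i, j, k, l ∈ {1,…,m}, the matrices A_{ij} and A_{kl} commute: A_{ij} A_{kl} = A_{kl} A_{ij}. -/

import Mathlib

set_option synthInstance.maxHeartbeats 1000000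
set_option maxHeartbeats 1600000
open TensorProduct

/-- The endomorphism `φ₁₃ = (τ ⊗ id) ∘ (id ⊗ φ) ∘ (τ ⊗ id)` of `D_E ⊗ D_E ⊗ D_V`,
where `τ` is the flip of the first two factors. -/
noncomputable def phi13 (K : Type*) [CommSemiring K] (E V : Type*)
    [AddCommMonoid E] [Module K E] [AddCommMonoid V] [Module K V]
    (φ : TensorProduct K E V →ₗ[K] TensorProduct K E V) :
    TensorProduct K E (TensorProduct K E V) →ₗ[K] TensorProduct K E (TensorProduct K E V) :=
  (TensorProduct.leftComm K E E V).toLinearMap ∘ₗ LinearMap.lTensor E φ ∘ₗ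
    (TensorProduct.leftComm K E E V).toLinearMap

/-- `φ` is tree-compatible if `φ₁₃ ∘ φ₂₃ = φ₂₃ ∘ φ₁₃`, where `φ₂₃ = id ⊗ φ`. -/
noncomputable def TreeCompatible (K : Type*) [CommSemiring K] (E V : Type*)
    [AddCommMonoid E] [Module K E] [AddCommMonoid V] [Module K V]
    (φ : TensorProduct K E V →ₗ[K] TensorProduct K E V) : Prop :=
  phi13 K E V φ ∘ₗ LinearMap.lTensor E φ = LinearMap.lTensor E φ ∘ₗ phi13 K E V φ

section Aux

variable {K : Type*} [Field K] {m n : ℕ}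

/-- Contraction functional: evaluate the first factor at `k`, second at `i`. -/
noncomputable def extrG (K : Type*) [Field K] (m n : ℕ) (i : Fin m) :
    TensorProduct K (Fin m → K) (Fin n → K) →ₗ[K] (Fin n → K) :=
  (TensorProduct.lid K (Fin n → K)).toLinearMap ∘ₗ
    TensorProduct.map (LinearMap.proj i) LinearMap.id

noncomputable def extrF (K : Type*) [Field K] (m n : ℕ) (k i : Fin m) :
    TensorProduct K (Fin m → K) (TensorProduct K (Fin m → K) (Fin n → K)) →ₗ[K] (Fin n → K) :=
  extrG K m n i ∘ₗ (TensorProduct.lid K _).toLinearMap ∘ₗ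
    TensorProduct.map (LinearMap.proj k) LinearMap.id

@[simp] lemma extrG_tmul (i : Fin m) (b : Fin m → K) (v : Fin n → K) :
    extrG K m n i (b ⊗ₜ v) = b i • v := by
  simp [extrG]

@[simp] lemma extrF_tmul (k i : Fin m) (a b : Fin m → K) (v : Fin n → K) :
    extrF K m n k i (a ⊗ₜ (b ⊗ₜ v)) = a k • b i • v := by
  simp [extrF]

variable (A : Fin m → Fin m → Matrix (Fin n) (Fin n) K)
  (φ : TensorProduct K (Fin m → K) (Fin n → K) →ₗ[K]
      TensorProduct K (Fin m → K) (Fin n → K))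
  (hφ : ∀ (j : Fin m) (v : Fin n → K),
      φ ((Pi.single j (1 : K)) ⊗ₜ v) = ∑ i, (Pi.single i (1 : K)) ⊗ₜ[K] ((A i j).mulVec v))

include hφ

lemma key1 (a b : Fin m) (v : Fin n → K) :
    (phi13 K (Fin m → K) (Fin n → K) φ ∘ₗ LinearMap.lTensor (Fin m → K) φ)
        ((Pi.single a (1 : K)) ⊗ₜ ((Pi.single b (1 : K)) ⊗ₜ v)) =
      ∑ i, ∑ k, (Pi.single k (1 : K)) ⊗ₜ[K]
        ((Pi.single i (1 : K)) ⊗ₜ[K] ((A k a * A i b).mulVec v)) := by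
  simp [phi13, hφ, tmul_sum, map_sum, TensorProduct.leftComm_tmul, Matrix.mulVec_mulVec]

lemma key2 (a b : Fin m) (v : Fin n → K) :
    (LinearMap.lTensor (Fin m → K) φ ∘ₗ phi13 K (Fin m → K) (Fin n → K) φ)
        ((Pi.single a (1 : K)) ⊗ₜ ((Pi.single b (1 : K)) ⊗ₜ v)) =
      ∑ k, ∑ i, (Pi.single k (1 : K)) ⊗ₜ[K]
        ((Pi.single i (1 : K)) ⊗ₜ[K] ((A i b * A k a).mulVec v)) := by
  simp [phi13, hφ, tmul_sum, map_sum, TensorProduct.leftComm_tmul, Matrix.mulVec_mulVec]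

end Aux

/-- With `D_E = K^m`, `D_V = K^n`, and `φ` given by the block matrix with blocks
`A_{ij}`, the map `φ` is tree-compatible iff all the blocks pairwise commute. -/
theorem treeCompatible_iff_blocks_commute (K : Type*) [Field K] [CharZero K]
    (m n : ℕ) (hm : 1 ≤ m) (hn : 1 ≤ n)
    (A : Fin m → Fin m → Matrix (Fin n) (Fin n) K)
    (φ : TensorProduct K (Fin m → K) (Fin n → K) →ₗ[K]
      TensorProduct K (Fin m → K) (Fin n → K))
    (hφ : ∀ (j : Fin m) (v : Fin n → K),
      φ ((Pi.single j (1 : K)) ⊗ₜ v) = ∑ i, (Pi.single i (1 : K)) ⊗ₜ[K] ((A i j).mulVec v)) :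
    TreeCompatible K (Fin m → K) (Fin n → K) φ ↔
      ∀ i j k l, A i j * A k l = A k l * A i j := by
  constructor
  · intro h i j k l
    have hv : ∀ v : Fin n → K, (A i j * A k l).mulVec v = (A k l * A i j).mulVec v := by
      intro v
      have h1 := LinearMap.congr_fun h ((Pi.single j (1 : K)) ⊗ₜ ((Pi.single l (1 : K)) ⊗ₜ v))
      rw [key1 A φ hφ, key2 A φ hφ] at h1
      have h2 := congrArg (extrF K m n i k) h1
      simpa [map_sum, Pi.single_apply, Finset.sum_ite_eq, ite_smul] using h2
    ext r c
    have := congrFun (hv (Pi.single c 1)) r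
    simpa using this
  · intro hc
    unfold TreeCompatible
    apply Module.Basis.ext ((Pi.basisFun K (Fin m)).tensorProduct
      (((Pi.basisFun K (Fin m))).tensorProduct (Pi.basisFun K (Fin n))))
    rintro ⟨a, b, c⟩
    rw [Module.Basis.tensorProduct_apply', Module.Basis.tensorProduct_apply']
    simp only [Pi.basisFun_apply]
    rw [key1 A φ hφ, key2 A φ hφ, Finset.sum_comm]
    simp [hc]
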